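/- Let P ∈ ℤ[X] be monic of degree n with at least 2 nonzero coefficients, and γ ∈ (0,1] such that the degree of P − X^n is at most (1−γ)·n. Let F, G, H ∈ ℤ[X] with deg F, deg G, deg H < n. Then the norm of Δ = H − ((F·G) mod P) satisfies ‖Δ‖ ≤ ‖H‖ + min(#F, #G)·‖F‖·‖G‖·(#P·‖P‖)^{⌈1/γ⌉}. -/

import Mathlib

open Polynomial

/-- The norm of an integer polynomial: the maximum of the absolute values of its
coefficients (as a natural number). -/


noncomputable def polyNorm (F : Polynomial ℤ) : ℕ :=
  F.support.sup fun i => (F.coeff i).natAbs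

lemma natAbs_coeff_le (F : Polynomial ℤ) (i : ℕ) : (F.coeff i).natAbs ≤ polyNorm F := by
  by_cases h : i ∈ F.support
  · exact Finset.le_sup (f := fun i => (F.coeff i).natAbs) h
  · simp [Polynomial.notMem_support_iff.mp h]

lemma polyNorm_le (F : Polynomial ℤ) (c : ℕ) (h : ∀ i, (F.coeff i).natAbs ≤ c) :
    polyNorm F ≤ c := Finset.sup_le fun i _ => h i

lemma natAbs_sum_le {ι : Type*} (s : Finset ι) (f : ι → ℤ) :
    (∑ i ∈ s, f i).natAbs ≤ ∑ i ∈ s, (f i).natAbs := by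
  have h := Finset.abs_sum_le_sum_abs f s
  simp only [Int.abs_eq_natAbs] at h
  exact_mod_cast h

lemma polyNorm_sub_le (A B : Polynomial ℤ) :
    polyNorm (A - B) ≤ polyNorm A + polyNorm B := by
  refine polyNorm_le _ _ fun i => ?_
  rw [Polynomial.coeff_sub]
  exact (Int.natAbs_sub_le _ _).trans
    (Nat.add_le_add (natAbs_coeff_le A i) (natAbs_coeff_le B i))

lemma polyNorm_add_le (A B : Polynomial ℤ) :
    polyNorm (A + B) ≤ polyNorm A + polyNorm B := by
  refine polyNorm_le _ _ fun i => ?_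
  rw [Polynomial.coeff_add]
  exact (Int.natAbs_add_le _ _).trans
    (Nat.add_le_add (natAbs_coeff_le A i) (natAbs_coeff_le B i))

lemma polyNorm_mul_le (A B : Polynomial ℤ) :
    polyNorm (A * B) ≤ A.support.card * polyNorm A * polyNorm B := by
  refine polyNorm_le _ _ fun k => ?_
  conv_lhs => rw [A.as_sum_support_C_mul_X_pow]
  rw [Finset.sum_mul, Polynomial.finset_sum_coeff]
  refine (natAbs_sum_le _ _).trans ?_
  have h : ∀ i ∈ A.support,
      ((C (A.coeff i) * X ^ i * B).coeff k).natAbs ≤ polyNorm A * polyNorm B := by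
    intro i _
    rw [mul_comm (C (A.coeff i) * X ^ i) B, ← mul_assoc, Polynomial.coeff_mul_X_pow']
    split_ifs with hik
    · rw [Polynomial.coeff_mul_C, Int.natAbs_mul]
      exact (Nat.mul_le_mul (natAbs_coeff_le B _) (natAbs_coeff_le A _)).trans (le_of_eq (Nat.mul_comm _ _))
    · simp
  calc ∑ i ∈ A.support, ((C (A.coeff i) * X ^ i * B).coeff k).natAbs
      ≤ A.support.card * (polyNorm A * polyNorm B) := by
        simpa using Finset.sum_le_card_nsmul _ _ _ h
    _ = A.support.card * polyNorm A * polyNorm B := by ring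


lemma coeff_iterate_divX (n : ℕ) (Q : Polynomial ℤ) (i : ℕ) :
    (Polynomial.divX^[n] Q).coeff i = Q.coeff (i + n) := by
  induction n generalizing Q i with
  | zero => simp
  | succ n ih =>
    rw [Function.iterate_succ_apply, ih, Polynomial.coeff_divX, Nat.add_assoc]

lemma natDegree_iterate_divX_le (n : ℕ) (Q : Polynomial ℤ) :
    (Polynomial.divX^[n] Q).natDegree ≤ Q.natDegree - n := by
  rw [Polynomial.natDegree_le_iff_coeff_eq_zero]
  intro N hN
  rw [coeff_iterate_divX]
  exact Polynomial.coeff_eq_zero_of_natDegree_lt (by omega)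

lemma natDegree_lo_le (n : ℕ) (Q : Polynomial ℤ) (hn : 1 ≤ n) :
    (Q - Polynomial.divX^[n] Q * X ^ n).natDegree ≤ n - 1 := by
  rw [Polynomial.natDegree_le_iff_coeff_eq_zero]
  intro N hN
  rw [Polynomial.coeff_sub, Polynomial.coeff_mul_X_pow', if_pos (by omega : n ≤ N),
    coeff_iterate_divX]
  rw [Nat.sub_add_cancel (by omega : n ≤ N), sub_self]

lemma coeff_lo (n : ℕ) (Q : Polynomial ℤ) (i : ℕ) :
    (Q - Polynomial.divX^[n] Q * X ^ n).coeff i = if i < n then Q.coeff i else 0 := by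
  rw [Polynomial.coeff_sub, Polynomial.coeff_mul_X_pow']
  split_ifs with h1 h2 h2
  · omega
  · rw [coeff_iterate_divX, Nat.sub_add_cancel (by omega : n ≤ i), sub_self]
  · rw [sub_zero]
  · omega

noncomputable def stepFun (n : ℕ) (D : Polynomial ℤ) (Q : Polynomial ℤ) : Polynomial ℤ :=
  (Q - Polynomial.divX^[n] Q * X ^ n) + Polynomial.divX^[n] Q * D

lemma stepFun_modByMonic (n : ℕ) (P : Polynomial ℤ) (hP : P.Monic) (Q : Polynomial ℤ) :
    stepFun n (X ^ n - P) Q %ₘ P = Q %ₘ P := by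
  have h1 : stepFun n (X ^ n - P) Q = Q - Polynomial.divX^[n] Q * P := by
    rw [stepFun]; ring
  rw [h1, Polynomial.sub_modByMonic,
    (Polynomial.modByMonic_eq_zero_iff_dvd hP).mpr (dvd_mul_left P _), sub_zero]

lemma natDegree_stepFun_le (n : ℕ) (D Q : Polynomial ℤ) (hn : 1 ≤ n) :
    (stepFun n D Q).natDegree ≤ max (n - 1) (Q.natDegree - n + D.natDegree) :=
  (Polynomial.natDegree_add_le _ _).trans
    (max_le_max (natDegree_lo_le n Q hn)
      (Polynomial.natDegree_mul_le.trans
        (Nat.add_le_add (natDegree_iterate_divX_le n Q) le_rfl)))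

lemma polyNorm_stepFun_le (n : ℕ) (D Q : Polynomial ℤ) :
    polyNorm (stepFun n D Q) ≤ polyNorm Q + D.support.card * polyNorm D * polyNorm Q := by
  have hlo : polyNorm (Q - Polynomial.divX^[n] Q * X ^ n) ≤ polyNorm Q := by
    refine polyNorm_le _ _ fun i => ?_
    rw [coeff_lo]
    split_ifs
    · exact natAbs_coeff_le Q i
    · simp
  have hhi : polyNorm (Polynomial.divX^[n] Q) ≤ polyNorm Q := by
    refine polyNorm_le _ _ fun i => ?_
    rw [coeff_iterate_divX]; exact natAbs_coeff_le Q _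
  refine (polyNorm_add_le _ _).trans (Nat.add_le_add hlo ?_)
  rw [mul_comm (Polynomial.divX^[n] Q) D]
  exact (polyNorm_mul_le D _).trans (Nat.mul_le_mul_left _ hhi)

theorem norm_delta_le (n : ℕ) (γ : ℝ) (P F G H : Polynomial ℤ)
    (hP : P.Monic) (hPdeg : P.natDegree = n) (hPsp : 2 ≤ P.support.card)
    (hγ0 : 0 < γ) (hγ1 : γ ≤ 1)
    (hgap : ((P - X ^ n).natDegree : ℝ) ≤ (1 - γ) * n)
    (hF : F.degree < n) (hG : G.degree < n) (hH : H.degree < n) :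
    polyNorm (H - (F * G) %ₘ P) ≤
      polyNorm H + min F.support.card G.support.card * polyNorm F * polyNorm G *
        (P.support.card * polyNorm P) ^ ⌈1 / γ⌉₊ := by
  classical
  -- n ≥ 1
  have hn : 1 ≤ n := by
    by_contra h
    have hn0 : P.natDegree = 0 := by omega
    have hP1 : P = 1 := hP.natDegree_eq_zero.mp hn0
    rw [hP1, ← Polynomial.C_1, Polynomial.support_C one_ne_zero] at hPsp
    simp at hPsp
  set D : Polynomial ℤ := X ^ n - P with hDdef
  set m := D.natDegree with hm
  set k := ⌈1 / γ⌉₊ with hk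
  have hcoeffPn : P.coeff n = 1 := by
    have h := hP.coeff_natDegree; rwa [hPdeg] at h
  have hDm : (m : ℝ) ≤ (1 - γ) * n := by
    have h1 : D = -(P - X ^ n) := by rw [hDdef]; ring
    rw [hm, h1, Polynomial.natDegree_neg]; exact hgap
  have hmn : m < n := by
    by_contra h
    push_neg at h
    have h1 : (n : ℝ) ≤ m := by exact_mod_cast h
    have h2 : (1 : ℝ) ≤ n := by exact_mod_cast hn
    nlinarith
  have hDn0 : D.coeff n = 0 := by
    rw [hDdef, Polynomial.coeff_sub, Polynomial.coeff_X_pow, if_pos rfl, hcoeffPn, sub_self]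
  have hDcoeff : ∀ i, i ≠ n → D.coeff i = -P.coeff i := by
    intro i hi
    rw [hDdef, Polynomial.coeff_sub, Polynomial.coeff_X_pow, if_neg hi, zero_sub]
  have hnotmem : n ∉ D.support := by
    simp [Polynomial.mem_support_iff, hDn0]
  have hsupp : P.support = insert n D.support := by
    ext i
    simp only [Polynomial.mem_support_iff, Finset.mem_insert]
    by_cases hi : i = n
    · subst hi; simp [hcoeffPn]
    · rw [hDcoeff i hi]
      simp [hi]
  have hcard : P.support.card = D.support.card + 1 := by
    rw [hsupp, Finset.card_insert_of_notMem hnotmem]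
  have hnormP1 : 1 ≤ polyNorm P := by
    have h := natAbs_coeff_le P n
    rw [hcoeffPn] at h
    simpa using h
  have hnormD : polyNorm D ≤ polyNorm P := by
    refine polyNorm_le _ _ fun i => ?_
    by_cases hi : i = n
    · subst hi; rw [hDn0]; simp
    · rw [hDcoeff i hi, Int.natAbs_neg]; exact natAbs_coeff_le P i
  set B := P.support.card * polyNorm P with hB
  set R : ℕ → Polynomial ℤ := fun j => (stepFun n D)^[j] (F * G) with hR
  -- mod invariance
  have hmod : ∀ j, R j %ₘ P = (F * G) %ₘ P := by
    intro j
    induction j with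
    | zero => simp [hR]
    | succ j ih =>
      have h1 : R (j + 1) = stepFun n D (R j) := by
        rw [hR]; simp [Function.iterate_succ_apply']
      rw [h1, hDdef, stepFun_modByMonic n P hP, ih]
  -- norm bound
  have hstepnorm : ∀ Q, polyNorm (stepFun n D Q) ≤ polyNorm Q * B := by
    intro Q
    calc polyNorm (stepFun n D Q) ≤ polyNorm Q + D.support.card * polyNorm D * polyNorm Q :=
          polyNorm_stepFun_le n D Q
      _ ≤ polyNorm Q * polyNorm P + D.support.card * polyNorm P * polyNorm Q := by
          refine Nat.add_le_add ?_ ?_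
          · exact Nat.le_mul_of_pos_right _ (by omega)
          · exact Nat.mul_le_mul_right _ (Nat.mul_le_mul_left _ hnormD)
      _ = polyNorm Q * ((D.support.card + 1) * polyNorm P) := by ring
      _ = polyNorm Q * B := by rw [hB, hcard]
  have hnormR : ∀ j, polyNorm (R j) ≤ polyNorm (F * G) * B ^ j := by
    intro j
    induction j with
    | zero => simp [hR]
    | succ j ih =>
      have h1 : R (j + 1) = stepFun n D (R j) := by
        rw [hR]; simp [Function.iterate_succ_apply']
      calc polyNorm (R (j + 1)) ≤ polyNorm (R j) * B := by rw [h1]; exact hstepnorm _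
        _ ≤ polyNorm (F * G) * B ^ j * B := Nat.mul_le_mul_right _ ih
        _ = polyNorm (F * G) * B ^ (j + 1) := by ring
  -- degree invariant
  have hndF : F.natDegree < n := by
    by_cases h : F = 0
    · simpa [h] using (show 0 < n by omega)
    · exact (Polynomial.natDegree_lt_iff_degree_lt h).mpr hF
  have hndG : G.natDegree < n := by
    by_cases h : G = 0
    · simpa [h] using (show 0 < n by omega)
    · exact (Polynomial.natDegree_lt_iff_degree_lt h).mpr hG
  have hinv : ∀ j, (R j).natDegree + j * (n - m) ≤ 2 * n - 2 ∨ (R j).natDegree < n := by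
    intro j
    induction j with
    | zero =>
      left
      have h1 : (F * G).natDegree ≤ F.natDegree + G.natDegree := Polynomial.natDegree_mul_le
      have h2 : R 0 = F * G := rfl
      rw [h2]
      omega
    | succ j ih =>
      have h1 : R (j + 1) = stepFun n D (R j) := by
        rw [hR]; simp [Function.iterate_succ_apply']
      have hb : (R (j + 1)).natDegree ≤ max (n - 1) ((R j).natDegree - n + m) := by
        rw [h1]; exact natDegree_stepFun_le n D (R j) hn
      by_cases hlt : (R j).natDegree < n
      · right
        have hz : (R j).natDegree - n = 0 := by omega
        rw [hz] at hb
        have hb2 : (R (j + 1)).natDegree ≤ n - 1 :=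
          hb.trans (max_le le_rfl (by omega))
        omega
      · rcases ih with h | h
        · rcases le_total ((R j).natDegree - n + m) (n - 1) with hc | hc
          · right
            have hb2 : (R (j + 1)).natDegree ≤ n - 1 := hb.trans (by omega)
            omega
          · left
            rw [max_eq_right hc] at hb
            rw [Nat.succ_mul]
            omega
        · omega
  -- k * (n - m) ≥ n
  have hkc : n ≤ k * (n - m) := by
    have h1 : (1 / γ : ℝ) ≤ (k : ℝ) := Nat.le_ceil _
    have h2 : (1 : ℝ) ≤ (k : ℝ) * γ := by
      rw [← div_le_iff₀ hγ0] at *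
      linarith [h1]
    have h3 : γ * n ≤ (n : ℝ) - m := by nlinarith [hDm]
    have h4 : ((n - m : ℕ) : ℝ) = (n : ℝ) - m := by
      rw [Nat.cast_sub (le_of_lt hmn)]
    have h5 : (n : ℝ) ≤ (k : ℝ) * ((n : ℝ) - m) := by
      have hk0 : (0 : ℝ) ≤ (k : ℝ) := Nat.cast_nonneg _
      have hn0 : (0 : ℝ) ≤ (n : ℝ) := Nat.cast_nonneg _
      nlinarith [mul_le_mul_of_nonneg_left h3 hk0]
    have h6 : (n : ℝ) ≤ ((k * (n - m) : ℕ) : ℝ) := by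
      rw [Nat.cast_mul, h4]; exact h5
    exact_mod_cast h6
  have hdegRk : (R k).natDegree < n := by
    rcases hinv k with h | h
    · omega
    · exact h
  -- conclude (F*G) %ₘ P = R k
  have hdeglt : (R k).degree < P.degree := by
    rw [Polynomial.degree_eq_natDegree hP.ne_zero, hPdeg]
    calc (R k).degree ≤ ((R k).natDegree : WithBot ℕ) := Polynomial.degree_le_natDegree
      _ < (n : WithBot ℕ) := by exact_mod_cast hdegRk
  have hmodeq : (F * G) %ₘ P = R k := by
    rw [← hmod k, (Polynomial.modByMonic_eq_self_iff hP).mpr hdeglt]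
  rw [hmodeq]
  have hFG : polyNorm (F * G) ≤ min F.support.card G.support.card * polyNorm F * polyNorm G := by
    rcases min_cases F.support.card G.support.card with ⟨h, _⟩ | ⟨h, _⟩ <;> rw [h]
    · exact polyNorm_mul_le F G
    · rw [mul_comm F G]
      exact (polyNorm_mul_le G F).trans (le_of_eq (by ring))
  calc polyNorm (H - R k) ≤ polyNorm H + polyNorm (R k) := polyNorm_sub_le _ _
    _ ≤ polyNorm H + polyNorm (F * G) * B ^ k := Nat.add_le_add_left (hnormR k) _
    _ ≤ polyNorm H + min F.support.card G.support.card * polyNorm F * polyNorm G * B ^ k :=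
        Nat.add_le_add_left (Nat.mul_le_mul_right _ hFG) _
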